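/- Let (Ω,d) be a Polish metric space and P a Markov kernel with Ollivier curvature at least κ ∈ [0,1], i.e., W₁(P(x,·), P(y,·)) ≤ (1−κ)d(x,y) for all x,y. Let ψ : [0,D] → [0,∞) be increasing and concave (D the diameter of Ω), and let H : Ω → ℂ^{m×m} satisfy ‖H(x) − H(y)‖_op ≤ ψ(d(x,y)) for all x,y. Then ‖(PH)(x) − (PH)(y)‖_op ≤ ψ((1−κ)d(x,y)) for all x,y. -/

import Mathlib

open MeasureTheory ProbabilityTheory
open scoped ENNReal

/-- The Wasserstein-1 distance between two measures, as an infimum over couplings. -/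
noncomputable def W1 {Ω : Type*} [MeasurableSpace Ω] [PseudoEMetricSpace Ω]
    (μ ν : Measure Ω) : ℝ≥0∞ :=
  ⨅ π : {π : Measure (Ω × Ω) // π.map Prod.fst = μ ∧ π.map Prod.snd = ν},
    ∫⁻ p, edist p.1 p.2 ∂(π : Measure (Ω × Ω))

/-- The ℓ²→ℓ² operator norm of a complex square matrix. -/
noncomputable def opNorm {m : ℕ} (A : Matrix (Fin m) (Fin m) ℂ) : ℝ :=
  ‖Matrix.toEuclideanCLM (𝕜 := ℂ) A‖

open scoped NNReal

section AuxLemmas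

/-- `thickenedIndicatorAux δ E` is `(1/δ)`-Lipschitz (in an inequality form convenient
for integration against couplings). -/
lemma thickenedIndicatorAux_le_add {α : Type*} [PseudoEMetricSpace α] (δ : ℝ) (E : Set α)
    (x y : α) :
    thickenedIndicatorAux δ E x ≤ thickenedIndicatorAux δ E y + edist x y / ENNReal.ofReal δ := by
  have h1 : EMetric.infEdist y E ≤ EMetric.infEdist x E + edist x y := by
    simpa [edist_comm, EMetric.infEdist] using EMetric.infEdist_le_infEdist_add_edist (x := y) (y := x) (s := E)
  have h2 : EMetric.infEdist y E / ENNReal.ofReal δ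
      ≤ EMetric.infEdist x E / ENNReal.ofReal δ + edist x y / ENNReal.ofReal δ := by
    rw [← ENNReal.add_div]
    exact ENNReal.div_le_div_right h1 _
  unfold thickenedIndicatorAux
  rw [tsub_le_iff_right]
  calc (1 : ℝ≥0∞)
      ≤ (1 - EMetric.infEdist y E / ENNReal.ofReal δ) + EMetric.infEdist y E / ENNReal.ofReal δ :=
        le_tsub_add
    _ ≤ (1 - EMetric.infEdist y E / ENNReal.ofReal δ)
          + (EMetric.infEdist x E / ENNReal.ofReal δ + edist x y / ENNReal.ofReal δ) :=
        add_le_add_right h2 _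
    _ = 1 - EMetric.infEdist y E / ENNReal.ofReal δ + edist x y / ENNReal.ofReal δ
          + EMetric.infEdist x E / ENNReal.ofReal δ := by ring

/-- If there are couplings of `μ` and `ν` with arbitrarily small transport cost, then
`μ F ≤ ν F` for every closed set `F`. -/
lemma measure_le_of_couplings {Ω : Type*} [MeasurableSpace Ω] [MetricSpace Ω]
    [SecondCountableTopology Ω] [BorelSpace Ω]
    (μ ν : Measure Ω) [IsProbabilityMeasure μ] [IsProbabilityMeasure ν]
    (h : ∀ ε : ℝ≥0∞, 0 < ε → ∃ π : Measure (Ω × Ω),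
      π.map Prod.fst = μ ∧ π.map Prod.snd = ν ∧ ∫⁻ p, edist p.1 p.2 ∂π < ε)
    {F : Set Ω} (hF : IsClosed F) : μ F ≤ ν F := by
  have δs_pos : ∀ n : ℕ, 0 < (1 : ℝ) / ((n : ℝ) + 1) := fun n => by positivity
  have δs_lim : Filter.Tendsto (fun n : ℕ => (1 : ℝ) / ((n : ℝ) + 1)) Filter.atTop (nhds 0) :=
    tendsto_one_div_add_atTop_nhds_zero_nat
  have key := MeasureTheory.tendsto_lintegral_thickenedIndicator_of_isClosed ν hF δs_pos δs_lim
  refine ge_of_tendsto' key fun n => ?_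
  have hδpos : 0 < (1 : ℝ) / ((n : ℝ) + 1) := δs_pos n
  have hcoe : ∀ ω : Ω, ((thickenedIndicator (δs_pos n) F ω : ℝ≥0) : ℝ≥0∞)
      = thickenedIndicatorAux ((1 : ℝ) / ((n : ℝ) + 1)) F ω := by
    intro ω
    simp only [thickenedIndicator.coeFn_eq_comp, Function.comp_apply]
    exact ENNReal.coe_toNNReal thickenedIndicatorAux_lt_top.ne
  have hIν : (∫⁻ ω, ((thickenedIndicator (δs_pos n) F ω : ℝ≥0) : ℝ≥0∞) ∂ν)
      = ∫⁻ ω, thickenedIndicatorAux ((1 : ℝ) / ((n : ℝ) + 1)) F ω ∂ν :=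
    lintegral_congr fun ω => hcoe ω
  show μ F ≤ ∫⁻ ω, ((thickenedIndicator (δs_pos n) F ω : ℝ≥0) : ℝ≥0∞) ∂ν
  rw [hIν]
  set δ : ℝ := (1 : ℝ) / ((n : ℝ) + 1) with hδ
  have hmeasTIA : Measurable (thickenedIndicatorAux δ F) :=
    (continuous_thickenedIndicatorAux hδpos F).measurable
  refine ENNReal.le_of_forall_pos_le_add fun ε hε _ => ?_
  have hc0 : (ENNReal.ofReal δ) ≠ 0 := (ENNReal.ofReal_pos.mpr hδpos).ne'
  obtain ⟨π, hπ1, hπ2, hπe⟩ := h (ENNReal.ofReal δ * ε)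
    (ENNReal.mul_pos hc0 (by exact_mod_cast hε.ne'))
  have hμF : μ F ≤ ∫⁻ ω, thickenedIndicatorAux δ F ω ∂μ := by
    rw [← lintegral_indicator_one hF.measurableSet]
    exact lintegral_mono fun ω => indicator_le_thickenedIndicatorAux δ F ω
  have hmapfst : ∫⁻ ω, thickenedIndicatorAux δ F ω ∂μ
      = ∫⁻ p : Ω × Ω, thickenedIndicatorAux δ F p.1 ∂π := by
    rw [← hπ1, lintegral_map hmeasTIA measurable_fst]
  have hmapsnd : ∫⁻ p : Ω × Ω, thickenedIndicatorAux δ F p.2 ∂π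
      = ∫⁻ ω, thickenedIndicatorAux δ F ω ∂ν := by
    rw [← hπ2, lintegral_map hmeasTIA measurable_snd]
  have hstep : ∫⁻ p : Ω × Ω, thickenedIndicatorAux δ F p.1 ∂π
      ≤ ∫⁻ p : Ω × Ω, thickenedIndicatorAux δ F p.2 ∂π
        + (∫⁻ p : Ω × Ω, edist p.1 p.2 ∂π) / ENNReal.ofReal δ := by
    calc ∫⁻ p : Ω × Ω, thickenedIndicatorAux δ F p.1 ∂π
        ≤ ∫⁻ p : Ω × Ω, (thickenedIndicatorAux δ F p.2 + edist p.1 p.2 / ENNReal.ofReal δ) ∂π :=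
          lintegral_mono fun p => thickenedIndicatorAux_le_add δ F p.1 p.2
      _ = ∫⁻ p : Ω × Ω, thickenedIndicatorAux δ F p.2 ∂π
            + ∫⁻ p : Ω × Ω, edist p.1 p.2 / ENNReal.ofReal δ ∂π :=
          lintegral_add_left (hmeasTIA.comp measurable_snd) _
      _ = _ := by
          congr 1
          simp_rw [div_eq_mul_inv]
          exact lintegral_mul_const' _ _ (ENNReal.inv_ne_top.mpr hc0)
  have hεbound : (∫⁻ p : Ω × Ω, edist p.1 p.2 ∂π) / ENNReal.ofReal δ ≤ ε := by
    rw [ENNReal.div_le_iff hc0 ENNReal.ofReal_ne_top]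
    calc (∫⁻ p : Ω × Ω, edist p.1 p.2 ∂π) ≤ ENNReal.ofReal δ * ε := hπe.le
      _ = ↑ε * ENNReal.ofReal δ := mul_comm _ _
  calc μ F ≤ ∫⁻ ω, thickenedIndicatorAux δ F ω ∂μ := hμF
    _ = ∫⁻ p : Ω × Ω, thickenedIndicatorAux δ F p.1 ∂π := hmapfst
    _ ≤ ∫⁻ p : Ω × Ω, thickenedIndicatorAux δ F p.2 ∂π
          + (∫⁻ p : Ω × Ω, edist p.1 p.2 ∂π) / ENNReal.ofReal δ := hstep
    _ ≤ (∫⁻ ω, thickenedIndicatorAux δ F ω ∂ν) + ε := by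
          rw [hmapsnd]
          exact add_le_add le_rfl hεbound

/-- Two probability measures with couplings of arbitrarily small transport cost coincide. -/
lemma measure_eq_of_couplings {Ω : Type*} [MeasurableSpace Ω] [MetricSpace Ω]
    [SecondCountableTopology Ω] [BorelSpace Ω]
    (μ ν : Measure Ω) [IsProbabilityMeasure μ] [IsProbabilityMeasure ν]
    (h : ∀ ε : ℝ≥0∞, 0 < ε → ∃ π : Measure (Ω × Ω),
      π.map Prod.fst = μ ∧ π.map Prod.snd = ν ∧ ∫⁻ p, edist p.1 p.2 ∂π < ε) : μ = ν := by
  have hswap : ∀ ε : ℝ≥0∞, 0 < ε → ∃ π : Measure (Ω × Ω),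
      π.map Prod.fst = ν ∧ π.map Prod.snd = μ ∧ ∫⁻ p, edist p.1 p.2 ∂π < ε := by
    intro ε hε
    obtain ⟨π, h1, h2, he⟩ := h ε hε
    refine ⟨π.map Prod.swap, ?_, ?_, ?_⟩
    · rw [Measure.map_map measurable_fst measurable_swap]
      exact h2
    · rw [Measure.map_map measurable_snd measurable_swap]
      exact h1
    · rw [lintegral_map measurable_edist measurable_swap]
      simpa [edist_comm] using he
  refine MeasureTheory.ext_of_generate_finite {s : Set Ω | IsClosed s} ?_ isPiSystem_isClosed
    ?_ (by simp)
  · rw [BorelSpace.measurable_eq (α := Ω), borel_eq_generateFrom_isClosed]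
  · intro s hs
    exact le_antisymm (measure_le_of_couplings μ ν h hs) (measure_le_of_couplings ν μ hswap hs)

end AuxLemmas

/-- If `P` has Ollivier curvature at least `κ` and the increments of `H` are
controlled by an increasing concave `ψ`, then the increments of `PH` are controlled
by `ψ((1−κ)·d(x,y))`. -/
theorem stmt9 {m : ℕ} {Ω : Type*} [MeasurableSpace Ω] [MetricSpace Ω]
    [PolishSpace Ω] [BorelSpace Ω]
    (P : Kernel Ω Ω) [IsMarkovKernel P]
    (κ : ℝ) (hκ0 : 0 ≤ κ) (hκ1 : κ ≤ 1)
    (hcurv : ∀ x y : Ω, W1 (P x) (P y) ≤ ENNReal.ofReal ((1 - κ) * dist x y))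
    (D : ℝ) (hD : ∀ x y : Ω, dist x y ≤ D)
    (ψ : ℝ → ℝ) (hmono : MonotoneOn ψ (Set.Icc 0 D))
    (hconc : ConcaveOn ℝ (Set.Icc 0 D) ψ)
    (hψ0 : ∀ r ∈ Set.Icc (0:ℝ) D, 0 ≤ ψ r)
    (H : Ω → Matrix (Fin m) (Fin m) ℂ)
    (hint : ∀ x i j, Integrable (fun z => H z i j) (P x))
    (hH : ∀ x y, opNorm (H x - H y) ≤ ψ (dist x y)) :
    ∀ x y, opNorm ((Matrix.of fun i j => ∫ z, H z i j ∂(P x)) -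
        Matrix.of fun i j => ∫ z, H z i j ∂(P y)) ≤ ψ ((1 - κ) * dist x y) := by
  intro x y
  classical
  set t : ℝ := (1 - κ) * dist x y with ht
  have h1κ : (0:ℝ) ≤ 1 - κ := by linarith
  have hdnn : (0:ℝ) ≤ dist x y := dist_nonneg
  have ht0 : 0 ≤ t := mul_nonneg h1κ hdnn
  have htd : t ≤ dist x y := by
    have := mul_le_of_le_one_left hdnn (by linarith : (1:ℝ) - κ ≤ 1)
    simpa [ht] using this
  have htD : t ≤ D := htd.trans (hD x y)
  have hD0 : (0:ℝ) ≤ D := by simpa using hD x x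
  have hgcont : Continuous fun p : Ω × Ω => dist p.1 p.2 := continuous_dist
  -- integrability of ψ ∘ dist for probability measures on the product
  have hφmono : Monotone fun r : ℝ => ψ (max 0 (min r D)) := by
    intro a b hab
    have hmem : ∀ r : ℝ, max 0 (min r D) ∈ Set.Icc (0:ℝ) D := fun r =>
      ⟨le_max_left _ _, max_le hD0 (min_le_right _ _)⟩
    exact hmono (hmem a) (hmem b) (max_le_max le_rfl (min_le_min hab le_rfl))
  have hφmeas : Measurable fun r : ℝ => ψ (max 0 (min r D)) := hφmono.measurable
  have hψg_eq : (fun p : Ω × Ω => ψ (max 0 (min (dist p.1 p.2) D)))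
      = fun p : Ω × Ω => ψ (dist p.1 p.2) := by
    funext p
    rw [min_eq_left (hD _ _), max_eq_right dist_nonneg]
  have hψint : ∀ (π : Measure (Ω × Ω)), IsProbabilityMeasure π →
      Integrable (fun p : Ω × Ω => ψ (dist p.1 p.2)) π := by
    intro π hπ
    haveI := hπ
    have hmeas : AEStronglyMeasurable (fun p : Ω × Ω => ψ (dist p.1 p.2)) π := by
      rw [← hψg_eq]
      exact (hφmeas.comp hgcont.measurable).aestronglyMeasurable
    refine ⟨hmeas, HasFiniteIntegral.of_bounded (C := ψ D) ?_⟩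
    refine Filter.Eventually.of_forall fun p => ?_
    have h1 : 0 ≤ ψ (dist p.1 p.2) := hψ0 _ ⟨dist_nonneg, hD _ _⟩
    have h2 : ψ (dist p.1 p.2) ≤ ψ D := hmono ⟨dist_nonneg, hD _ _⟩ ⟨hD0, le_rfl⟩ (hD _ _)
    rw [Real.norm_eq_abs, abs_of_nonneg h1]
    exact h2
  -- the basic coupling bound
  have main : ∀ π : Measure (Ω × Ω), IsProbabilityMeasure π → π.map Prod.fst = P x →
      π.map Prod.snd = P y →
      opNorm ((Matrix.of fun i j => ∫ z, H z i j ∂(P x)) -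
        Matrix.of fun i j => ∫ z, H z i j ∂(P y)) ≤ ∫ p : Ω × Ω, ψ (dist p.1 p.2) ∂π := by
    intro π hπprob hπ1 hπ2
    haveI := hπprob
    have hm1 : ∀ i j, AEStronglyMeasurable (fun z : Ω => H z i j) (π.map Prod.fst) := by
      intro i j; rw [hπ1]; exact (hint x i j).aestronglyMeasurable
    have hm2 : ∀ i j, AEStronglyMeasurable (fun z : Ω => H z i j) (π.map Prod.snd) := by
      intro i j; rw [hπ2]; exact (hint y i j).aestronglyMeasurable
    have hi1 : ∀ i j, Integrable (fun p : Ω × Ω => H p.1 i j) π := by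
      intro i j
      exact (integrable_map_measure (hm1 i j) measurable_fst.aemeasurable).mp
        (by rw [hπ1]; exact hint x i j)
    have hi2 : ∀ i j, Integrable (fun p : Ω × Ω => H p.2 i j) π := by
      intro i j
      exact (integrable_map_measure (hm2 i j) measurable_snd.aemeasurable).mp
        (by rw [hπ2]; exact hint y i j)
    have heq1 : ∀ i j, ∫ z, H z i j ∂(P x) = ∫ p : Ω × Ω, H p.1 i j ∂π := by
      intro i j
      rw [← hπ1, integral_map measurable_fst.aemeasurable (hm1 i j)]
    have heq2 : ∀ i j, ∫ z, H z i j ∂(P y) = ∫ p : Ω × Ω, H p.2 i j ∂π := by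
      intro i j
      rw [← hπ2, integral_map measurable_snd.aemeasurable (hm2 i j)]
    have hiF : ∀ i j, Integrable (fun p : Ω × Ω => H p.1 i j - H p.2 i j) π :=
      fun i j => (hi1 i j).sub (hi2 i j)
    set A : Matrix (Fin m) (Fin m) ℂ :=
      Matrix.of fun i j => ∫ p : Ω × Ω, (H p.1 i j - H p.2 i j) ∂π with hA
    have hMA : (Matrix.of fun i j => ∫ z, H z i j ∂(P x)) -
        (Matrix.of fun i j => ∫ z, H z i j ∂(P y)) = A := by
      ext i j
      simp only [Matrix.sub_apply, Matrix.of_apply, hA]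
      rw [heq1 i j, heq2 i j, ← integral_sub (hi1 i j) (hi2 i j)]
    rw [hMA]
    have expand : ∀ B : Matrix (Fin m) (Fin m) ℂ,
        Matrix.toEuclideanCLM (𝕜 := ℂ) B
          = ∑ i, ∑ j, B i j • Matrix.toEuclideanCLM (𝕜 := ℂ) (Matrix.single i j 1) := by
      intro B
      conv_lhs => rw [Matrix.matrix_eq_sum_single B]
      rw [map_sum]
      refine Finset.sum_congr rfl fun i _ => ?_
      rw [map_sum]
      refine Finset.sum_congr rfl fun j _ => ?_
      rw [← _root_.map_smul, Matrix.smul_single, smul_eq_mul, mul_one]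
    have hGrep : (fun p : Ω × Ω => Matrix.toEuclideanCLM (𝕜 := ℂ) (H p.1 - H p.2))
        = fun p : Ω × Ω => ∑ i, ∑ j, (H p.1 i j - H p.2 i j) •
            Matrix.toEuclideanCLM (𝕜 := ℂ) (Matrix.single i j 1) := by
      funext p
      rw [expand (H p.1 - H p.2)]
      simp only [Matrix.sub_apply]
    have hGint : Integrable (fun p : Ω × Ω =>
        Matrix.toEuclideanCLM (𝕜 := ℂ) (H p.1 - H p.2)) π := by
      rw [hGrep]
      exact integrable_finset_sum (ε' := EuclideanSpace ℂ (Fin m) →L[ℂ] EuclideanSpace ℂ (Fin m)) _ fun i _ => integrable_finset_sum (ε' := EuclideanSpace ℂ (Fin m) →L[ℂ] EuclideanSpace ℂ (Fin m)) _ fun j _ =>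
        (hiF i j).smul_const _
    have hAint : Matrix.toEuclideanCLM (𝕜 := ℂ) A
        = ∫ p : Ω × Ω, Matrix.toEuclideanCLM (𝕜 := ℂ) (H p.1 - H p.2) ∂π := by
      rw [expand A, hGrep]
      rw [integral_finset_sum _ fun i _ => integrable_finset_sum (ε' := EuclideanSpace ℂ (Fin m) →L[ℂ] EuclideanSpace ℂ (Fin m)) _ fun j _ =>
        (hiF i j).smul_const _]
      refine Finset.sum_congr rfl fun i _ => ?_
      rw [integral_finset_sum _ fun j _ => (hiF i j).smul_const _]
      refine Finset.sum_congr rfl fun j _ => ?_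
      rw [integral_smul_const]
      congr 1
    calc opNorm A = ‖Matrix.toEuclideanCLM (𝕜 := ℂ) A‖ := rfl
      _ = ‖∫ p : Ω × Ω, Matrix.toEuclideanCLM (𝕜 := ℂ) (H p.1 - H p.2) ∂π‖ := by rw [hAint]
      _ ≤ ∫ p : Ω × Ω, ‖Matrix.toEuclideanCLM (𝕜 := ℂ) (H p.1 - H p.2)‖ ∂π :=
          norm_integral_le_integral_norm _
      _ ≤ ∫ p : Ω × Ω, ψ (dist p.1 p.2) ∂π := by
          refine integral_mono hGint.norm (hψint π hπprob) fun p => ?_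
          exact hH p.1 p.2
  -- extracting near-optimal couplings
  have getπ : ∀ b : ℝ≥0∞, W1 (P x) (P y) < b → ∃ π : Measure (Ω × Ω),
      π.map Prod.fst = P x ∧ π.map Prod.snd = P y ∧ ∫⁻ p, edist p.1 p.2 ∂π < b := by
    intro b hb
    rw [W1, iInf_lt_iff] at hb
    obtain ⟨π, hπ⟩ := hb
    exact ⟨π.1, π.2.1, π.2.2, hπ⟩
  have probπ : ∀ π : Measure (Ω × Ω), π.map Prod.fst = P x → IsProbabilityMeasure π := by
    intro π hπ1
    constructor
    have h1 : π.map Prod.fst Set.univ = 1 := by rw [hπ1]; exact measure_univ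
    rwa [Measure.map_apply measurable_fst MeasurableSet.univ, Set.preimage_univ] at h1
  have hcurv' : W1 (P x) (P y) ≤ ENNReal.ofReal t := by
    rw [ht]; exact hcurv x y
  rcases eq_or_lt_of_le ht0 with ht0' | ht0'
  · -- t = 0 : the two measures coincide
    have hPxy : P x = P y := by
      rcases eq_or_ne (dist x y) 0 with hd | hd
      · have : x = y := by rwa [dist_eq_zero] at hd
        rw [this]
      · refine measure_eq_of_couplings (P x) (P y) ?_
        intro ε hε
        have hlt : W1 (P x) (P y) < ε := by
          have h0 : W1 (P x) (P y) ≤ 0 := by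
            simpa [← ht0'] using hcurv'
          exact lt_of_le_of_lt h0 hε
        exact getπ _ hlt
    rw [hPxy]
    have hz : (Matrix.of fun i j => ∫ z, H z i j ∂(P y)) -
        (Matrix.of fun i j => ∫ z, H z i j ∂(P y)) = 0 := sub_self _
    rw [hz]
    have h0 : opNorm (0 : Matrix (Fin m) (Fin m) ℂ) = 0 := by
      show ‖Matrix.toEuclideanCLM (𝕜 := ℂ) (0 : Matrix (Fin m) (Fin m) ℂ)‖ = 0
      rw [map_zero, norm_zero]
    rw [h0, ← ht0']
    exact hψ0 0 ⟨le_rfl, hD0⟩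
  · -- 0 < t : supporting line argument
    set S : Set ℝ := (fun u => (ψ u - ψ t) / (u - t)) '' Set.Ioc t D with hS
    set c : ℝ := sSup S with hc
    have htmem : t ∈ Set.Icc (0:ℝ) D := ⟨ht0, htD⟩
    have hbdd : BddAbove S := by
      refine ⟨(ψ t - ψ 0) / t, ?_⟩
      rintro _ ⟨u, ⟨hu1, hu2⟩, rfl⟩
      have h3 := hconc.slope_anti_adjacent (x := 0) (y := t) (z := u)
        ⟨le_rfl, hD0⟩ ⟨(ht0'.trans hu1).le, hu2⟩ ht0' hu1
      simpa using h3
    have hc0 : 0 ≤ c := by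
      rcases eq_or_lt_of_le htD with hteq | htlt
      · have hSe : S = ∅ := by rw [hS, ← hteq, Set.Ioc_self, Set.image_empty]
        rw [hc, hSe, Real.sSup_empty]
      · have hmemS : (ψ D - ψ t) / (D - t) ∈ S := ⟨D, ⟨htlt, le_rfl⟩, rfl⟩
        refine le_trans ?_ (le_csSup hbdd hmemS)
        exact div_nonneg (sub_nonneg.mpr (hmono htmem ⟨hD0, le_rfl⟩ htD))
          (sub_nonneg.mpr htD)
    have hline : ∀ u ∈ Set.Icc (0:ℝ) D, ψ u ≤ ψ t + c * (u - t) := by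
      intro u hu
      rcases lt_trichotomy u t with hul | hue | hug
      · have hs0 : 0 ≤ (ψ t - ψ u) / (t - u) :=
          div_nonneg (sub_nonneg.mpr (hmono hu htmem hul.le)) (sub_nonneg.mpr hul.le)
        have hcs : c ≤ (ψ t - ψ u) / (t - u) := by
          rw [hc]
          refine Real.sSup_le ?_ hs0
          rintro _ ⟨w, ⟨hw1, hw2⟩, rfl⟩
          exact hconc.slope_anti_adjacent hu ⟨(ht0'.trans hw1).le, hw2⟩ hul hw1
        have hmul := mul_le_mul_of_nonpos_right hcs (by linarith : u - t ≤ 0)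
        have hcancel : (ψ t - ψ u) / (t - u) * (t - u) = ψ t - ψ u :=
          div_mul_cancel₀ _ (by intro hcon; rw [sub_eq_zero] at hcon; exact absurd hcon.symm hul.ne)
        have hflip : (ψ t - ψ u) / (t - u) * (u - t)
            = -((ψ t - ψ u) / (t - u) * (t - u)) := by ring
        linarith [hmul, hcancel, hflip]
      · rw [hue]; simp
      · have hmemS : (ψ u - ψ t) / (u - t) ∈ S := ⟨u, ⟨hug, hu.2⟩, rfl⟩
        have hcs : (ψ u - ψ t) / (u - t) ≤ c := le_csSup hbdd hmemS
        have hcancel : (ψ u - ψ t) / (u - t) * (u - t) = ψ u - ψ t :=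
          div_mul_cancel₀ _ (by intro hcon; rw [sub_eq_zero] at hcon; exact absurd hcon hug.ne')
        have hmul := mul_le_mul_of_nonneg_right hcs (by linarith : (0:ℝ) ≤ u - t)
        linarith [hmul, hcancel]
    have hmain : ∀ ε : ℝ, 0 < ε →
        opNorm ((Matrix.of fun i j => ∫ z, H z i j ∂(P x)) -
          Matrix.of fun i j => ∫ z, H z i j ∂(P y)) ≤ ψ t + c * ε := by
      intro ε hε
      have hlt : W1 (P x) (P y) < ENNReal.ofReal (t + ε) := by
        refine lt_of_le_of_lt hcurv' ?_
        exact (ENNReal.ofReal_lt_ofReal_iff_of_nonneg ht0).mpr (by linarith)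
      obtain ⟨π, hπ1, hπ2, hπe⟩ := getπ _ hlt
      have hπprob := probπ π hπ1
      haveI := hπprob
      have hgint : Integrable (fun p : Ω × Ω => dist p.1 p.2) π := by
        refine ⟨hgcont.measurable.aestronglyMeasurable, HasFiniteIntegral.of_bounded (C := D) ?_⟩
        refine Filter.Eventually.of_forall fun p => ?_
        rw [Real.norm_eq_abs, abs_of_nonneg dist_nonneg]
        exact hD _ _
      have hsub : Integrable (fun p : Ω × Ω => dist p.1 p.2 - t) π :=
        hgint.sub (integrable_const t)
      have hmul : Integrable (fun p : Ω × Ω => c * (dist p.1 p.2 - t)) π :=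
        hsub.const_mul c
      have hadd : Integrable (fun p : Ω × Ω => ψ t + c * (dist p.1 p.2 - t)) π :=
        (integrable_const _).add hmul
      have hr : ∫ p : Ω × Ω, dist p.1 p.2 ∂π ≤ t + ε := by
        have hre : ∫ p : Ω × Ω, dist p.1 p.2 ∂π
            = (∫⁻ p : Ω × Ω, edist p.1 p.2 ∂π).toReal := by
          rw [integral_eq_lintegral_of_nonneg_ae
            (Filter.Eventually.of_forall fun p => dist_nonneg)
            hgcont.measurable.aestronglyMeasurable]
          congr 1
          refine lintegral_congr fun p => ?_
          rw [edist_dist]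
        rw [hre]
        calc (∫⁻ p : Ω × Ω, edist p.1 p.2 ∂π).toReal
            ≤ (ENNReal.ofReal (t + ε)).toReal :=
              ENNReal.toReal_mono ENNReal.ofReal_ne_top hπe.le
          _ = t + ε := ENNReal.toReal_ofReal (by linarith)
      calc opNorm ((Matrix.of fun i j => ∫ z, H z i j ∂(P x)) -
            Matrix.of fun i j => ∫ z, H z i j ∂(P y))
          ≤ ∫ p : Ω × Ω, ψ (dist p.1 p.2) ∂π := main π hπprob hπ1 hπ2
        _ ≤ ∫ p : Ω × Ω, (ψ t + c * (dist p.1 p.2 - t)) ∂π := by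
            exact integral_mono (hψint π hπprob) hadd fun p => hline _ ⟨dist_nonneg, hD _ _⟩
        _ = ψ t + c * ((∫ p : Ω × Ω, dist p.1 p.2 ∂π) - t) := by
            rw [integral_add (integrable_const _) hmul, integral_const, integral_const_mul c,
              integral_sub hgint (integrable_const t), integral_const]
            simp [measure_univ]
        _ ≤ ψ t + c * ε := by
            have hle : (∫ p : Ω × Ω, dist p.1 p.2 ∂π) - t ≤ ε := by linarith
            have := mul_le_mul_of_nonneg_left hle hc0
            linarith
    refine le_of_forall_pos_le_add fun ε hε => ?_
    have h1 := hmain (ε / (c + 1)) (by positivity)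
    have h2 : c * (ε / (c + 1)) ≤ ε := by
      rw [mul_div_assoc', div_le_iff₀ (by linarith : (0:ℝ) < c + 1)]
      nlinarith
    linarith
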